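/- Let G be connected and non-bipartite and let 0 < ε < 1. Then JSR(𝒫̃_{G,ε}) < 1, where 𝒫̃_{G,ε} := {BPBᵀ : P ∈ 𝒫_{G,ε}}. -/

import Mathlib

open Matrix Filter

noncomputable section

/-- Frobenius norm of a real matrix. -/
def frobNorm {N d : ℕ} (X : Matrix (Fin N) (Fin d) ℝ) : ℝ :=
  Real.sqrt (∑ i, ∑ j, (X i j) ^ 2)

/-- μ(X) = ‖X − 1γ_X‖_F where γ_X = (1/N)1ᵀX. -/
def gnnMu {N d : ℕ} (X : Matrix (Fin N) (Fin d) ℝ) : ℝ :=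
  frobNorm (X - Matrix.of fun _i j => (∑ k, X k j) / N)

/-- Row-stochastic matrix. -/
def rowStochastic {N : ℕ} (P : Matrix (Fin N) (Fin N) ℝ) : Prop :=
  (∀ i j, 0 ≤ P i j) ∧ ∀ i, ∑ j, P i j = 1

/-- The set 𝒫_{G,ε}. -/
def Pset {N : ℕ} (G : SimpleGraph (Fin N)) (ε : ℝ) : Set (Matrix (Fin N) (Fin N) ℝ) :=
  {P | rowStochastic P ∧ (∀ i j, G.Adj i j → ε ≤ P i j ∧ P i j ≤ 1) ∧
    ∀ i j, ¬ G.Adj i j → P i j = 0}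

/-- The set 𝒟 of diagonal matrices with diagonal entries in [0,1]. -/
def Dset (N : ℕ) : Set (Matrix (Fin N) (Fin N) ℝ) :=
  {D | D.IsDiag ∧ ∀ i, 0 ≤ D i i ∧ D i i ≤ 1}

/-- The set 𝒟_δ of diagonal matrices with diagonal entries in [0,δ]. -/
def DsetB (N : ℕ) (δ : ℝ) : Set (Matrix (Fin N) (Fin N) ℝ) :=
  {D | D.IsDiag ∧ ∀ i, 0 ≤ D i i ∧ D i i ≤ δ}

/-- The set ℳ_{G,ε} = {DP : D ∈ 𝒟, P ∈ 𝒫_{G,ε}}. -/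
def Mset {N : ℕ} (G : SimpleGraph (Fin N)) (ε : ℝ) : Set (Matrix (Fin N) (Fin N) ℝ) :=
  {M | ∃ D ∈ Dset N, ∃ P ∈ Pset G ε, M = D * P}

/-- The set ℳ_{G,ε,δ} = {DP : D ∈ 𝒟_δ, P ∈ 𝒫_{G,ε}}. -/
def MsetB {N : ℕ} (G : SimpleGraph (Fin N)) (ε δ : ℝ) : Set (Matrix (Fin N) (Fin N) ℝ) :=
  {M | ∃ D ∈ DsetB N δ, ∃ P ∈ Pset G ε, M = D * P}

/-- Backward product P^(t) P^(t-1) ⋯ P^(0). -/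
def bprod {N : ℕ} (P : ℕ → Matrix (Fin N) (Fin N) ℝ) : ℕ → Matrix (Fin N) (Fin N) ℝ
  | 0 => P 0
  | t + 1 => P (t + 1) * bprod P t

/-- The orthogonal projection J = I − (1/N)11ᵀ onto the complement of span{1}. -/
def projJ (N : ℕ) : Matrix (Fin N) (Fin N) ℝ :=
  1 - (N : ℝ)⁻¹ • Matrix.of fun _ _ => (1 : ℝ)

/-- Matrix ∞-norm: maximum absolute row sum. -/
def infNorm {N : ℕ} (M : Matrix (Fin N) (Fin N) ℝ) : ℝ :=
  ⨆ i, ∑ j, |M i j|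

/-- Forward product of entrywise absolute values |W^(0)||W^(1)|⋯|W^(k)|. -/
def Wabs {d : ℕ} (W : ℕ → Matrix (Fin d) (Fin d) ℝ) : ℕ → Matrix (Fin d) (Fin d) ℝ
  | 0 => (W 0).map (fun x => |x|)
  | k + 1 => Wabs W k * (W (k + 1)).map (fun x => |x|)

/-- Q̂_{t₀, t₀+k} = P^{t₀+k} D^{t₀+k-1} P^{t₀+k-1} ⋯ D^{t₀} P^{t₀}. -/
def Qhat {N : ℕ} (D P : ℕ → Matrix (Fin N) (Fin N) ℝ) (t₀ : ℕ) :
    ℕ → Matrix (Fin N) (Fin N) ℝ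
  | 0 => P t₀
  | k + 1 => P (t₀ + k + 1) * D (t₀ + k) * Qhat D P t₀ k

/-- Q_{0,k} = D^(k) P^(k) ⋯ D^(0) P^(0). -/
def Qprod {N : ℕ} (D P : ℕ → Matrix (Fin N) (Fin N) ℝ) : ℕ → Matrix (Fin N) (Fin N) ℝ
  | 0 => D 0 * P 0
  | k + 1 => D (k + 1) * P (k + 1) * Qprod D P k

/-- P^(m+k) P^(m+k-1) ⋯ P^(m). -/
def PprodFrom {N : ℕ} (P : ℕ → Matrix (Fin N) (Fin N) ℝ) (m : ℕ) :
    ℕ → Matrix (Fin N) (Fin N) ℝ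
  | 0 => P m
  | k + 1 => P (m + k + 1) * PprodFrom P m k

/-- D^(m+k) P^(m+k) ⋯ D^(m) P^(m). -/
def QprodFrom {N : ℕ} (D P : ℕ → Matrix (Fin N) (Fin N) ℝ) (m : ℕ) :
    ℕ → Matrix (Fin N) (Fin N) ℝ
  | 0 => D m * P m
  | k + 1 => D (m + k + 1) * P (m + k + 1) * QprodFrom D P m k

/-- Joint spectral radius of a set of square matrices (w.r.t. the Frobenius norm;
the value is independent of the chosen norm). -/
def JSR {n : ℕ} (A : Set (Matrix (Fin n) (Fin n) ℝ)) : ℝ :=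
  Filter.limsup (fun k : ℕ =>
    sSup {x : ℝ | ∃ M : Fin k → Matrix (Fin n) (Fin n) ℝ,
      (∀ i, M i ∈ A) ∧ x = frobNorm (List.ofFn M).prod ^ (k : ℝ)⁻¹}) Filter.atTop

/-- Spectral radius of a real square matrix: max modulus of its complex eigenvalues. -/
def specRad {n : ℕ} (M : Matrix (Fin n) (Fin n) ℝ) : ℝ :=
  sSup {r : ℝ | ∃ z ∈ spectrum ℂ (M.map Complex.ofReal), r = ‖z‖}

end

section AuxSpectral

variable {N : ℕ}

lemma odd_closed_walk {V : Type*} [Nonempty V] {G : SimpleGraph V}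
    (hconn : G.Connected) (hnb : ¬ G.Colorable 2) :
    ∃ (v : V) (w : G.Walk v v), Odd w.length := by
  by_contra h
  push_neg at h
  apply hnb
  obtain ⟨r⟩ := ‹Nonempty V›
  have pick : ∀ v, G.Walk r v := fun v => (hconn.preconnected r v).some
  refine ⟨SimpleGraph.Coloring.mk (fun v => ⟨(pick v).length % 2, Nat.mod_lt _ two_pos⟩) ?_⟩
  intro v w hadj heq
  have hcl : ¬ Odd ((pick v).append (SimpleGraph.Walk.cons hadj (pick w).reverse)).length :=
    h r _
  simp only [SimpleGraph.Walk.length_append, SimpleGraph.Walk.length_cons,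
    SimpleGraph.Walk.length_reverse, Nat.odd_iff] at hcl
  have : (pick v).length % 2 = (pick w).length % 2 := by
    simpa using congrArg Fin.val heq
  omega

lemma exists_neighbor {N : ℕ} (hN : 2 ≤ N) {G : SimpleGraph (Fin N)}
    (hconn : G.Connected) (b : Fin N) : ∃ c, G.Adj b c := by
  have : ∃ a : Fin N, a ≠ b := by
    refine ⟨if b = ⟨0, by omega⟩ then ⟨1, by omega⟩ else ⟨0, by omega⟩, ?_⟩
    split <;> simp_all [Fin.ext_iff] <;> omega
  obtain ⟨a, ha⟩ := this
  have w := (hconn.preconnected b a).some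
  cases w with
  | nil => exact absurd rfl ha.symm
  | cons h _ => exact ⟨_, h⟩

lemma pad_walk {V : Type*} {G : SimpleGraph V} {a b c : V} (hbc : G.Adj b c)
    (w : G.Walk a b) (k : ℕ) : ∃ w' : G.Walk a b, w'.length = w.length + 2 * k := by
  induction k with
  | zero => exact ⟨w, by simp⟩
  | succ k ih =>
      obtain ⟨w', hw'⟩ := ih
      refine ⟨w'.append (SimpleGraph.Walk.cons hbc (SimpleGraph.Walk.cons hbc.symm
        SimpleGraph.Walk.nil)), ?_⟩
      simp [SimpleGraph.Walk.length_append, hw']; omega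

lemma exists_uniform_walk_length {N : ℕ} (hN : 2 ≤ N) {G : SimpleGraph (Fin N)}
    (hconn : G.Connected) (hnb : ¬ G.Colorable 2) :
    ∃ m, 1 ≤ m ∧ ∀ a b : Fin N, ∃ w : G.Walk a b, w.length = m := by
  have : Nonempty (Fin N) := ⟨⟨0, by omega⟩⟩
  obtain ⟨v0, W, hW⟩ := odd_closed_walk hconn hnb
  have hWodd : W.length % 2 = 1 := Nat.odd_iff.mp hW
  have pa : ∀ a, G.Walk a v0 := fun a => (hconn.preconnected a v0).some
  have pb : ∀ b, G.Walk v0 b := fun b => (hconn.preconnected v0 b).some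
  set A := Finset.univ.sup (fun a => (pa a).length) with hA
  set Bb := Finset.univ.sup (fun b => (pb b).length) with hBb
  set m := 2 * (A + Bb + W.length) + W.length with hm
  have hW1 : 1 ≤ W.length := by omega
  refine ⟨m, by omega, fun a b => ?_⟩
  obtain ⟨c, hbc⟩ := exists_neighbor hN hconn b
  have haA : (pa a).length ≤ A := Finset.le_sup (f := fun a => (pa a).length) (Finset.mem_univ a)
  have hbB : (pb b).length ≤ Bb := Finset.le_sup (f := fun b => (pb b).length) (Finset.mem_univ b)
  by_cases hpar : ((pa a).length + (pb b).length) % 2 = m % 2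
  · -- use w1 := pa.append pb, pad
    obtain ⟨w', hw'⟩ := pad_walk hbc ((pa a).append (pb b))
      ((m - ((pa a).length + (pb b).length)) / 2)
    refine ⟨w', ?_⟩
    rw [hw', SimpleGraph.Walk.length_append]
    omega
  · obtain ⟨w', hw'⟩ := pad_walk hbc ((pa a).append (W.append (pb b)))
      ((m - ((pa a).length + W.length + (pb b).length)) / 2)
    refine ⟨w', ?_⟩
    rw [hw', SimpleGraph.Walk.length_append, SimpleGraph.Walk.length_append]
    omega


lemma rowStochastic_one : rowStochastic (1 : Matrix (Fin N) (Fin N) ℝ) := by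
  constructor
  · intro i j
    by_cases h : i = j <;> simp [Matrix.one_apply, h]
  · intro i; simp [Matrix.one_apply]

lemma rowStochastic_mul {P Q : Matrix (Fin N) (Fin N) ℝ} (hP : rowStochastic P)
    (hQ : rowStochastic Q) : rowStochastic (P * Q) := by
  constructor
  · intro i j
    rw [Matrix.mul_apply]
    exact Finset.sum_nonneg fun c _ => mul_nonneg (hP.1 i c) (hQ.1 c j)
  · intro i
    simp only [Matrix.mul_apply]
    rw [Finset.sum_comm]
    calc ∑ c, ∑ j, P i c * Q c j = ∑ c, P i c * ∑ j, Q c j := by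
          simp [Finset.mul_sum]
      _ = 1 := by simp [hQ.2, hP.2 i]

lemma rowStochastic_listProd (L : List (Matrix (Fin N) (Fin N) ℝ))
    (h : ∀ P ∈ L, rowStochastic P) : rowStochastic L.prod := by
  induction L with
  | nil => simpa using rowStochastic_one
  | cons P L ih =>
      rw [List.prod_cons]
      exact rowStochastic_mul (h P (by simp)) (ih fun Q hQ => h Q (by simp [hQ]))

lemma listProd_nonneg (L : List (Matrix (Fin N) (Fin N) ℝ))
    (h : ∀ P ∈ L, ∀ a b, 0 ≤ P a b) : ∀ a b, 0 ≤ L.prod a b := by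
  induction L with
  | nil => intro a b; by_cases hab : a = b <;> simp [Matrix.one_apply, hab]
  | cons P L ih =>
      intro a b
      rw [List.prod_cons, Matrix.mul_apply]
      exact Finset.sum_nonneg fun c _ => mul_nonneg (h P (by simp) a c)
        (ih (fun Q hQ a b => h Q (by simp [hQ]) a b) c b)


lemma listProd_entry_ge {G : SimpleGraph (Fin N)} {ε : ℝ} (hε0 : 0 < ε) :
    ∀ (L : List (Matrix (Fin N) (Fin N) ℝ)), (∀ P ∈ L, P ∈ Pset G ε) →
    ∀ (a b : Fin N) (w : G.Walk a b), w.length = L.length →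
    ε ^ L.length ≤ L.prod a b := by
  intro L
  induction L with
  | nil =>
      intro _ a b w hw
      have hab : a = b := w.eq_of_length_eq_zero (by simpa using hw)
      subst hab
      simp [Matrix.one_apply]
  | cons P L ih =>
      intro hmem a b w hw
      cases w with
      | nil => simp at hw
      | @cons _ c _ hadj w' =>
          simp only [SimpleGraph.Walk.length_cons, List.length_cons,
            Nat.add_right_cancel_iff] at hw
          rw [List.prod_cons, Matrix.mul_apply, List.length_cons]
          have hPmem := hmem P (by simp)
          have hnn : ∀ d ∈ Finset.univ, 0 ≤ P a d * L.prod d b := by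
            intro d _
            exact mul_nonneg (hPmem.1.1 a d)
              (listProd_nonneg L (fun Q hQ x y => (hmem Q (by simp [hQ])).1.1 x y) d b)
          have hsingle : P a c * L.prod c b ≤ ∑ d, P a d * L.prod d b :=
            Finset.single_le_sum hnn (Finset.mem_univ c)
          refine le_trans ?_ hsingle
          rw [pow_succ, mul_comm (ε ^ L.length) ε]
          exact mul_le_mul ((hPmem.2.1 a c hadj).1)
            (ih (fun Q hQ => hmem Q (by simp [hQ])) c b w' hw)
            (pow_nonneg hε0.le _) (le_trans hε0.le (hPmem.2.1 a c hadj).1)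

lemma dobrushin {Q : Matrix (Fin N) (Fin N) ℝ} (hQ : rowStochastic Q) {η : ℝ}
    (hη : ∀ a b, η ≤ Q a b) {x : Fin N → ℝ} (hx : ∑ a, x a = 0) :
    ∑ b, |(x ᵥ* Q) b| ≤ (1 - N * η) * ∑ a, |x a| := by
  have key : ∀ b, (x ᵥ* Q) b = ∑ a, x a * (Q a b - η) := by
    intro b
    simp only [Matrix.vecMul, dotProduct]
    rw [Finset.sum_congr rfl (fun a _ => by ring_nf :
      ∀ a ∈ Finset.univ, x a * (Q a b - η) = x a * Q a b - x a * η)]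
    rw [Finset.sum_sub_distrib, ← Finset.sum_mul, hx]
    ring
  calc ∑ b, |(x ᵥ* Q) b| ≤ ∑ b, ∑ a, |x a| * (Q a b - η) := by
        refine Finset.sum_le_sum fun b _ => ?_
        rw [key b]
        refine le_trans (Finset.abs_sum_le_sum_abs _ _) (Finset.sum_le_sum fun a _ => ?_)
        rw [abs_mul, abs_of_nonneg (sub_nonneg.mpr (hη a b))]
    _ = ∑ a, |x a| * ((∑ b, Q a b) - N * η) := by
        rw [Finset.sum_comm]
        refine Finset.sum_congr rfl fun a _ => ?_
        rw [← Finset.mul_sum, Finset.sum_sub_distrib]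
        simp [mul_sub, Finset.card_univ]
    _ = (1 - N * η) * ∑ a, |x a| := by
        rw [Finset.sum_congr rfl fun a _ => by rw [hQ.2 a], ← Finset.sum_mul]
        ring

lemma sum_vecMul_zero {Q : Matrix (Fin N) (Fin N) ℝ} (hQ : rowStochastic Q)
    {x : Fin N → ℝ} (hx : ∑ a, x a = 0) : ∑ b, (x ᵥ* Q) b = 0 := by
  simp only [Matrix.vecMul, dotProduct]
  rw [Finset.sum_comm]
  calc ∑ a, ∑ b, x a * Q a b = ∑ a, x a * ∑ b, Q a b := by simp [Finset.mul_sum]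
    _ = 0 := by simp [hQ.2, hx]

lemma l1_nonexpansive : ∀ (L : List (Matrix (Fin N) (Fin N) ℝ)),
    (∀ P ∈ L, rowStochastic P) → ∀ x : Fin N → ℝ,
    ∑ b, |(x ᵥ* L.prod) b| ≤ ∑ a, |x a| := by
  intro L
  induction L with
  | nil => intro _ x; simp [Matrix.vecMul_one]
  | cons P L ih =>
      intro h x
      rw [List.prod_cons, ← Matrix.vecMul_vecMul]
      refine le_trans (ih (fun Q hQ => h Q (by simp [hQ])) (x ᵥ* P)) ?_
      have hP := h P (by simp)
      calc ∑ b, |(x ᵥ* P) b| ≤ ∑ b, ∑ a, |x a| * P a b := by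
            refine Finset.sum_le_sum fun b _ => ?_
            simp only [Matrix.vecMul, dotProduct]
            refine le_trans (Finset.abs_sum_le_sum_abs _ _) (Finset.sum_le_sum fun a _ => ?_)
            rw [abs_mul, abs_of_nonneg (hP.1 a b)]
        _ = ∑ a, |x a| := by
            rw [Finset.sum_comm]
            simp [← Finset.mul_sum, hP.2]


lemma row_sum_zero {B : Matrix (Fin (N - 1)) (Fin N) ℝ}
    (hB2 : B *ᵥ (fun _ => (1 : ℝ)) = 0) : ∀ i, ∑ j, B i j = 0 := by
  intro i
  have := congrFun hB2 i
  simpa [Matrix.mulVec, dotProduct] using this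

lemma BtB_eq {B : Matrix (Fin (N - 1)) (Fin N) ℝ} (hN : 2 ≤ N)
    (hB1 : B * Bᵀ = 1) (hB2 : B *ᵥ (fun _ => (1 : ℝ)) = 0) :
    Bᵀ * B = 1 - (N : ℝ)⁻¹ • Matrix.of (fun _ _ => (1 : ℝ)) := by
  have hNne : (N : ℝ) ≠ 0 := by positivity
  set s : ℝ := Real.sqrt ((N : ℝ)⁻¹) with hs
  have hss : s * s = (N : ℝ)⁻¹ := Real.mul_self_sqrt (by positivity)
  have hrow := row_sum_zero hB2
  set C : Matrix (Fin (N - 1) ⊕ Unit) (Fin N) ℝ :=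
    Matrix.of (fun x j => Sum.elim (fun a => B a j) (fun _ => s) x) with hC
  have hcard : Fintype.card (Fin (N - 1) ⊕ Unit) = Fintype.card (Fin N) := by
    simp; omega
  have e : (Fin (N - 1) ⊕ Unit) ≃ Fin N := Fintype.equivOfCardEq hcard
  have hCC : C * Cᵀ = 1 := by
    ext x y
    cases x with
    | inl a =>
        cases y with
        | inl b =>
            have h1 := congrFun (congrFun hB1 a) b
            simp only [Matrix.mul_apply, Matrix.transpose_apply, Matrix.one_apply] at h1 ⊢
            simpa [hC] using h1
        | inr u =>
            simp only [Matrix.mul_apply, Matrix.transpose_apply, Matrix.one_apply, hC]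
            simp [← Finset.sum_mul, hrow a]
    | inr u =>
        cases y with
        | inl b =>
            simp only [Matrix.mul_apply, Matrix.transpose_apply, Matrix.one_apply, hC]
            simp [← Finset.mul_sum, hrow b]
        | inr v =>
            simp only [Matrix.mul_apply, Matrix.transpose_apply, Matrix.one_apply, hC]
            simp [hss, Finset.card_univ, hNne]
  have hCtC : Cᵀ * C = 1 := (Matrix.mul_eq_one_comm_of_equiv e).mp hCC
  ext j j'
  have h2 := congrFun (congrFun hCtC j) j'
  simp only [Matrix.mul_apply, Matrix.transpose_apply, Fintype.sum_sum_type,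
    Finset.univ_unique, Finset.sum_singleton, hC] at h2
  simp only [Matrix.sub_apply, Matrix.smul_apply, Matrix.of_apply, smul_eq_mul, mul_one]
  rw [Matrix.mul_apply]
  simp only [Matrix.transpose_apply]
  simp only [Matrix.of_apply, Sum.elim_inl, Sum.elim_inr] at h2
  rw [Matrix.one_apply]
  split_ifs with h <;> [skip; skip] <;>
  · rw [Matrix.one_apply] at h2
    simp [h] at h2 ⊢
    linarith [hss]


lemma contract {G : SimpleGraph (Fin N)} {ε : ℝ} (hε0 : 0 < ε) {m : ℕ} (hm : 1 ≤ m)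
    (hw : ∀ a b : Fin N, ∃ w : G.Walk a b, w.length = m)
    {θ : ℝ} (hθ0 : 0 ≤ θ) (hθ : 1 - N * ε ^ m ≤ θ) :
    ∀ (n : ℕ) (L : List (Matrix (Fin N) (Fin N) ℝ)), L.length = n →
    (∀ P ∈ L, P ∈ Pset G ε) → ∀ x : Fin N → ℝ, (∑ a, x a = 0) →
    ∑ b, |(x ᵥ* L.prod) b| ≤ θ ^ (n / m) * ∑ a, |x a| := by
  intro n
  induction n using Nat.strong_induction_on with
  | _ n ih =>
    intro L hlen hmem x hx
    by_cases hn : n < m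
    · rw [Nat.div_eq_of_lt hn, pow_zero, one_mul]
      exact l1_nonexpansive L (fun P hP => (hmem P hP).1) x
    · push_neg at hn
      have hx_abs : (0:ℝ) ≤ ∑ a, |x a| := Finset.sum_nonneg fun a _ => abs_nonneg _
      rw [← List.take_append_drop m L, List.prod_append, ← Matrix.vecMul_vecMul]
      have htlen : (L.take m).length = m := by
        rw [List.length_take]; omega
      have htmem : ∀ P ∈ L.take m, P ∈ Pset G ε := fun P hP => hmem P (List.mem_of_mem_take hP)
      have hdmem : ∀ P ∈ L.drop m, P ∈ Pset G ε := fun P hP => hmem P (List.mem_of_mem_drop hP)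
      set Q := (L.take m).prod with hQdef
      have hQs : rowStochastic Q := rowStochastic_listProd _ (fun P hP => (htmem P hP).1)
      have hQη : ∀ a b, ε ^ m ≤ Q a b := by
        intro a b
        obtain ⟨w, hwl⟩ := hw a b
        have := listProd_entry_ge hε0 (L.take m) htmem a b w (by rw [htlen, hwl])
        rwa [htlen] at this
      set y := x ᵥ* Q with hy
      have hy1 : ∑ b, |y b| ≤ θ * ∑ a, |x a| := by
        refine le_trans (dobrushin hQs hQη hx) ?_
        exact mul_le_mul_of_nonneg_right hθ hx_abs
      have hy0 : ∑ b, y b = 0 := sum_vecMul_zero hQs hx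
      have hdlen : (L.drop m).length = n - m := by rw [List.length_drop, hlen]
      have hrec := ih (n - m) (by omega) (L.drop m) hdlen hdmem y hy0
      refine le_trans hrec ?_
      have hdiv : n / m = (n - m) / m + 1 := Nat.div_eq_sub_div (by omega) hn
      rw [hdiv, pow_succ, mul_assoc]
      refine mul_le_mul_of_nonneg_left ?_ (pow_nonneg hθ0 _)
      refine le_trans hy1 (le_of_eq rfl)


lemma collapse_step {B : Matrix (Fin (N - 1)) (Fin N) ℝ}
    (hBtB : Bᵀ * B = 1 - (N : ℝ)⁻¹ • Matrix.of (fun _ _ => (1 : ℝ)))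
    (hB2 : B *ᵥ (fun _ => (1 : ℝ)) = 0)
    {P R : Matrix (Fin N) (Fin N) ℝ} (hP : rowStochastic P) :
    (B * P * Bᵀ) * (B * R * Bᵀ) = B * (P * R) * Bᵀ := by
  have hones : P * (Matrix.of (fun _ _ => (1:ℝ)) : Matrix (Fin N) (Fin N) ℝ)
      = Matrix.of (fun _ _ => (1:ℝ)) := by
    ext a b
    simp [Matrix.mul_apply, hP.2 a]
  have hBones : B * (Matrix.of (fun _ _ => (1:ℝ)) : Matrix (Fin N) (Fin N) ℝ) = 0 := by
    ext i b
    simp [Matrix.mul_apply, row_sum_zero hB2 i]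
  have key : B * P * (Bᵀ * B) = B * P := by
    rw [hBtB, Matrix.mul_sub, Matrix.mul_one, Matrix.mul_smul, Matrix.mul_assoc B P, hones, hBones]
    simp
  calc (B * P * Bᵀ) * (B * R * Bᵀ)
      = (B * P * (Bᵀ * B)) * (R * Bᵀ) := by
        simp only [Matrix.mul_assoc]
    _ = B * (P * R) * Bᵀ := by rw [key]; simp only [Matrix.mul_assoc]

lemma collapse_list {B : Matrix (Fin (N - 1)) (Fin N) ℝ}
    (hBtB : Bᵀ * B = 1 - (N : ℝ)⁻¹ • Matrix.of (fun _ _ => (1 : ℝ)))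
    (hB2 : B *ᵥ (fun _ => (1 : ℝ)) = 0) :
    ∀ L : List (Matrix (Fin N) (Fin N) ℝ), L ≠ [] → (∀ P ∈ L, rowStochastic P) →
    (L.map (fun P => B * P * Bᵀ)).prod = B * L.prod * Bᵀ := by
  intro L
  induction L with
  | nil => intro h; exact absurd rfl h
  | cons P L ih =>
      intro _ hmem
      by_cases hL : L = []
      · subst hL; simp
      · rw [List.map_cons, List.prod_cons, List.prod_cons,
          ih hL (fun Q hQ => hmem Q (by simp [hQ])),
          collapse_step hBtB hB2 (hmem P (by simp))]


lemma entry_abs_le {B : Matrix (Fin (N - 1)) (Fin N) ℝ} (hB1 : B * Bᵀ = 1) :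
    ∀ i a, |B i a| ≤ 1 := by
  intro i a
  have hd := congrFun (congrFun hB1 i) i
  simp only [Matrix.mul_apply, Matrix.transpose_apply, Matrix.one_apply_eq] at hd
  have h1 : B i a * B i a ≤ 1 := by
    rw [← hd]
    exact Finset.single_le_sum (f := fun b => B i b * B i b)
      (fun b _ => mul_self_nonneg _) (Finset.mem_univ a)
  rw [← Real.sqrt_one, ← Real.sqrt_sq_eq_abs]
  exact Real.sqrt_le_sqrt (by rw [sq]; linarith)

lemma frob_prod_bound (hN : 2 ≤ N) {G : SimpleGraph (Fin N)} {ε : ℝ} (hε0 : 0 < ε)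
    {m : ℕ} (hm : 1 ≤ m) (hw : ∀ a b : Fin N, ∃ w : G.Walk a b, w.length = m)
    {θ : ℝ} (hθ0 : 0 ≤ θ) (hθ : 1 - N * ε ^ m ≤ θ)
    {B : Matrix (Fin (N - 1)) (Fin N) ℝ} (hB1 : B * Bᵀ = 1)
    (hB2 : B *ᵥ (fun _ => (1 : ℝ)) = 0)
    (hBtB : Bᵀ * B = 1 - (N : ℝ)⁻¹ • Matrix.of (fun _ _ => (1 : ℝ)))
    (k : ℕ) (hk : 1 ≤ k) (M : Fin k → Matrix (Fin (N - 1)) (Fin (N - 1)) ℝ)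
    (hM : ∀ i, ∃ P ∈ Pset G ε, M i = B * P * Bᵀ) :
    frobNorm (List.ofFn M).prod ≤ (N : ℝ) ^ 2 * θ ^ (k / m) := by
  choose P hPmem hMP using hM
  have hMfun : M = (fun p => B * p * Bᵀ) ∘ P := funext hMP
  have hofn : List.ofFn M = (List.ofFn P).map (fun p => B * p * Bᵀ) := by
    rw [hMfun, List.map_ofFn]
  have hne : List.ofFn P ≠ [] := by
    simp only [ne_eq, List.ofFn_eq_nil_iff]
    omega
  have hmem : ∀ Q ∈ List.ofFn P, Q ∈ Pset G ε := by
    intro Q hQ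
    obtain ⟨i, rfl⟩ := List.mem_ofFn.mp hQ
    exact hPmem i
  have hprod : (List.ofFn M).prod = B * (List.ofFn P).prod * Bᵀ := by
    rw [hofn]
    exact collapse_list hBtB hB2 _ hne (fun Q hQ => (hmem Q hQ).1)
  set Qm := (List.ofFn P).prod with hQm
  set q := k / m with hq
  set E : ℝ := (N : ℝ) * θ ^ q with hE
  have hE0 : 0 ≤ E := by positivity
  have hentry : ∀ i j, |(B * Qm * Bᵀ) i j| ≤ E := by
    intro i j
    set x : Fin N → ℝ := fun a => B i a with hx
    have hx0 : ∑ a, x a = 0 := row_sum_zero hB2 i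
    have hcon := contract hε0 hm hw hθ0 hθ k (List.ofFn P) List.length_ofFn hmem x hx0
    have hxl1 : ∑ a, |x a| ≤ (N : ℝ) := by
      calc ∑ a, |x a| ≤ ∑ _a : Fin N, (1:ℝ) :=
            Finset.sum_le_sum (fun a _ => entry_abs_le hB1 i a)
        _ = (N : ℝ) := by simp
    have heq : (B * Qm * Bᵀ) i j = ∑ b, (x ᵥ* Qm) b * B j b := by
      rw [Matrix.mul_apply]
      refine Finset.sum_congr rfl fun b _ => ?_
      simp [Matrix.mul_apply, Matrix.vecMul, dotProduct, hx]
    rw [heq]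
    calc |∑ b, (x ᵥ* Qm) b * B j b| ≤ ∑ b, |(x ᵥ* Qm) b| * |B j b| := by
          refine le_trans (Finset.abs_sum_le_sum_abs _ _) ?_
          exact le_of_eq (Finset.sum_congr rfl fun b _ => abs_mul _ _)
      _ ≤ ∑ b, |(x ᵥ* Qm) b| := by
          refine Finset.sum_le_sum fun b _ => ?_
          exact mul_le_of_le_one_right (abs_nonneg _) (entry_abs_le hB1 j b)
      _ ≤ θ ^ q * ∑ a, |x a| := hcon
      _ ≤ θ ^ q * (N : ℝ) := mul_le_mul_of_nonneg_left hxl1 (pow_nonneg hθ0 _)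
      _ = E := by rw [hE]; ring
  rw [hprod]
  have hsum : ∑ i, ∑ j, ((B * Qm * Bᵀ) i j) ^ 2 ≤ ((N : ℝ) ^ 2 * θ ^ q) ^ 2 := by
    have h1 : ∀ i j, ((B * Qm * Bᵀ) i j) ^ 2 ≤ E ^ 2 := by
      intro i j
      rw [← sq_abs]
      exact pow_le_pow_left₀ (abs_nonneg _) (hentry i j) 2
    calc ∑ i, ∑ j, ((B * Qm * Bᵀ) i j) ^ 2
        ≤ ∑ _i : Fin (N-1), ∑ _j : Fin (N-1), E ^ 2 :=
          Finset.sum_le_sum fun i _ => Finset.sum_le_sum fun j _ => h1 i j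
      _ = ((N - 1 : ℕ) : ℝ) * (((N - 1 : ℕ) : ℝ) * E ^ 2) := by
          simp [Finset.sum_const, Finset.card_univ, mul_assoc]
      _ ≤ ((N : ℝ) ^ 2 * θ ^ q) ^ 2 := by
          have hcast : ((N - 1 : ℕ) : ℝ) ≤ (N : ℝ) := Nat.cast_le.mpr (Nat.sub_le N 1)
          have hNc : (0:ℝ) ≤ ((N - 1 : ℕ) : ℝ) := Nat.cast_nonneg _
          have hstep : ((N - 1 : ℕ) : ℝ) * (((N - 1 : ℕ) : ℝ) * E ^ 2)
              ≤ (N : ℝ) * ((N : ℝ) * E ^ 2) := by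
            have hmul : ((N - 1 : ℕ) : ℝ) * ((N - 1 : ℕ) : ℝ) ≤ (N : ℝ) * (N : ℝ) :=
              mul_le_mul hcast hcast hNc (Nat.cast_nonneg N)
            nlinarith [sq_nonneg E, hmul]
          refine le_trans hstep (le_of_eq ?_)
          rw [hE]; ring
  calc frobNorm (B * Qm * Bᵀ) ≤ Real.sqrt (((N : ℝ) ^ 2 * θ ^ q) ^ 2) :=
        Real.sqrt_le_sqrt hsum
    _ = (N : ℝ) ^ 2 * θ ^ q := Real.sqrt_sq (by positivity)


lemma frobNorm_nonneg {n d : ℕ} (X : Matrix (Fin n) (Fin d) ℝ) : 0 ≤ frobNorm X :=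
  Real.sqrt_nonneg _



end AuxSpectral

/-- JSR(𝒫̃_{G,ε}) < 1. -/
theorem stmt_11 (N : ℕ) (hN : 2 ≤ N) (G : SimpleGraph (Fin N))
    (hconn : G.Connected) (hnb : ¬ G.Colorable 2)
    (ε : ℝ) (hε0 : 0 < ε) (hε1 : ε < 1)
    (B : Matrix (Fin (N - 1)) (Fin N) ℝ)
    (hB1 : B * Bᵀ = 1) (hB2 : B *ᵥ (fun _ => (1 : ℝ)) = 0) :
    JSR {Q : Matrix (Fin (N - 1)) (Fin (N - 1)) ℝ | ∃ P ∈ Pset G ε, Q = B * P * Bᵀ} < 1 := by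
  obtain ⟨m, hm, hw⟩ := exists_uniform_walk_length hN hconn hnb
  have hBtB := BtB_eq hN hB1 hB2
  set θ : ℝ := max (1 - N * ε ^ m) 2⁻¹ with hθdef
  have hθpos : 0 < θ := lt_of_lt_of_le (by norm_num) (le_max_right _ _)
  have hθ0 : 0 ≤ θ := hθpos.le
  have hθle : 1 - N * ε ^ m ≤ θ := le_max_left _ _
  have hθ1 : θ < 1 := by
    apply max_lt _ (by norm_num)
    have : (0:ℝ) < N * ε ^ m := by positivity
    linarith
  set C : ℝ := (N : ℝ) ^ 2 with hCdef
  have hC1 : 1 ≤ C := by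
    have : (2:ℝ) ≤ N := by exact_mod_cast hN
    nlinarith
  have hC0 : 0 < C := by linarith
  set mr : ℝ := (m : ℝ) with hmrdef
  have hmr : 0 < mr := by
    rw [hmrdef]
    exact_mod_cast Nat.lt_of_lt_of_le Nat.zero_lt_one hm
  set c : ℝ := θ ^ ((2 * mr)⁻¹) with hcdef
  have hc1 : c < 1 := Real.rpow_lt_one hθ0 hθ1 (by positivity)
  have hc0 : 0 ≤ c := Real.rpow_nonneg hθ0 _
  set A : ℝ := -(Real.log θ) / (4 * mr) with hAdef
  have hA : 0 < A := by
    have hlt := Real.log_neg hθpos hθ1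
    rw [hAdef]
    exact div_pos (by linarith) (by positivity)
  obtain ⟨K, hK⟩ := exists_nat_ge (Real.log C / A)
  unfold JSR
  set f : ℕ → ℝ := fun k : ℕ =>
    sSup {x : ℝ | ∃ M : Fin k → Matrix (Fin (N-1)) (Fin (N-1)) ℝ,
      (∀ i, M i ∈ {Q : Matrix (Fin (N - 1)) (Fin (N - 1)) ℝ | ∃ P ∈ Pset G ε, Q = B * P * Bᵀ}) ∧
      x = frobNorm (List.ofFn M).prod ^ (k : ℝ)⁻¹} with hfdef
  have hf0 : ∀ k, 0 ≤ f k := by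
    intro k
    apply Real.sSup_nonneg
    rintro x ⟨M, _, rfl⟩
    exact Real.rpow_nonneg (frobNorm_nonneg _) _
  have hbd : Filter.IsBoundedUnder (· ≥ ·) Filter.atTop f :=
    Filter.isBoundedUnder_of ⟨0, fun k => hf0 k⟩
  have hcob : IsCoboundedUnder (· ≤ ·) atTop f := hbd.isCobounded_flip
  refine lt_of_le_of_lt (Filter.limsup_le_of_le hcob ?_) hc1
  rw [Filter.eventually_atTop]
  refine ⟨max (4 * m) (K + 1), fun k hk => ?_⟩
  have hk4m : 4 * m ≤ k := le_trans (le_max_left _ _) hk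
  have hkK : K + 1 ≤ k := le_trans (le_max_right _ _) hk
  have hk1 : 1 ≤ k := by omega
  have hkpos : (0:ℝ) < k := by exact_mod_cast (by omega : 0 < k)
  apply Real.sSup_le _ hc0
  rintro x ⟨M, hM, rfl⟩
  have hfb := frob_prod_bound hN hε0 hm hw hθ0 hθle hB1 hB2 hBtB k hk1 M hM
  set q : ℕ := k / m with hqdef
  calc frobNorm (List.ofFn M).prod ^ (k : ℝ)⁻¹
      ≤ (C * θ ^ q) ^ (k : ℝ)⁻¹ :=
        Real.rpow_le_rpow (frobNorm_nonneg _) hfb (by positivity)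
    _ = C ^ (k : ℝ)⁻¹ * θ ^ ((q : ℝ) * (k : ℝ)⁻¹) := by
        rw [Real.mul_rpow hC0.le (pow_nonneg hθ0 _), ← Real.rpow_natCast θ q,
          ← Real.rpow_mul hθ0]
    _ ≤ Real.exp A * θ ^ ((3 : ℝ) / (4 * mr)) := by
        have hnat : 3 * k ≤ 4 * (m * q) := by
          rw [hqdef]
          have h1 := Nat.div_add_mod k m
          have h2 : k % m < m := Nat.mod_lt _ (by omega)
          set t := m * (k / m)
          omega
        have hexp : (3 : ℝ) / (4 * mr) ≤ (q : ℝ) * (k : ℝ)⁻¹ := by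
          rw [← div_eq_mul_inv, div_le_div_iff₀ (by positivity) hkpos, hmrdef]
          have hnat' : (3 : ℝ) * k ≤ 4 * ((m : ℝ) * (q : ℝ)) := by exact_mod_cast hnat
          nlinarith [hnat']
        have h2 : θ ^ ((q : ℝ) * (k : ℝ)⁻¹) ≤ θ ^ ((3 : ℝ) / (4 * mr)) :=
          Real.rpow_le_rpow_of_exponent_ge hθpos hθ1.le hexp
        have h3 : C ^ (k : ℝ)⁻¹ ≤ Real.exp A := by
          rw [Real.rpow_def_of_pos hC0]
          apply Real.exp_le_exp.mpr
          rw [← div_eq_mul_inv, div_le_iff₀ hkpos]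
          have hlogC : Real.log C ≤ A * K := by
            rw [div_le_iff₀ hA] at hK
            linarith
          have : A * (K : ℝ) ≤ A * k := by
            apply mul_le_mul_of_nonneg_left _ hA.le
            exact_mod_cast (by omega : K ≤ k)
          linarith
        exact mul_le_mul h3 h2 (Real.rpow_nonneg hθ0 _) (Real.exp_nonneg _)
    _ = c := by
        rw [show Real.exp A = θ ^ (-(4 * mr)⁻¹) by
          rw [Real.rpow_def_of_pos hθpos, hAdef]
          congr 1
          field_simp]
        rw [← Real.rpow_add hθpos, hcdef]
        congr 1
        field_simp
        ring
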